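/- De Bruijn–Erdős clique partition theorem: If the edge set of the complete graph K_t on t ≥ 2 vertices is partitioned into cliques (complete subgraphs), none of which is K_t itself, then the number of cliques in the partition is at least t. -/

import Mathlib

open Finset

/-- De Bruijn–Erdős clique partition theorem. -/
theorem deBruijn_Erdos_clique_partition (t m : ℕ) (ht : 2 ≤ t)
    (C : Fin m → Finset (Fin t))
    (hcover : ∀ u v : Fin t, u ≠ v → ∃! i : Fin m, u ∈ C i ∧ v ∈ C i)
    (hproper : ∀ i, C i ≠ Finset.univ) :
    t ≤ m := by
  classical
  -- the indicator vectors
  set f : Fin t → Fin m → ℝ := fun v i => if v ∈ C i then 1 else 0 with hf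
  -- number of cliques containing both u and v
  set N : Fin t → Fin t → ℕ := fun u v => (univ.filter (fun i => u ∈ C i ∧ v ∈ C i)).card
    with hN
  have hN1 : ∀ u v : Fin t, u ≠ v → N u v = 1 := by
    intro u v huv
    obtain ⟨i, hi, hiu⟩ := hcover u v huv
    apply Finset.card_eq_one.mpr ⟨i, ?_⟩
    ext j
    simp only [mem_filter, mem_univ, true_and, mem_singleton]
    exact ⟨fun h => hiu j h, fun h => h ▸ hi⟩
  -- every vertex is in at least two cliques
  have hr : ∀ v : Fin t, 2 ≤ N v v := by
    intro v
    obtain ⟨u, hu⟩ : ∃ u : Fin t, u ≠ v := by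
      obtain ⟨u, hu⟩ := Fintype.exists_ne_of_one_lt_card (by rw [Fintype.card_fin]; exact ht) v
      exact ⟨u, hu⟩
    obtain ⟨i, ⟨hiu, hiv⟩, _⟩ := hcover u v hu
    obtain ⟨w, hw⟩ : ∃ w : Fin t, w ∉ C i := by
      by_contra h
      push_neg at h
      exact hproper i (Finset.eq_univ_iff_forall.mpr h)
    have hwv : w ≠ v := fun h => hw (h ▸ hiv)
    obtain ⟨j, ⟨hjw, hjv⟩, _⟩ := hcover w v hwv
    have hij : i ≠ j := fun h => hw (h ▸ hjw)
    calc 2 = ({i, j} : Finset (Fin m)).card := (Finset.card_pair hij).symm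
    _ ≤ N v v := by
        apply Finset.card_le_card
        intro k hk
        simp only [mem_insert, mem_singleton] at hk
        simp only [hN, mem_filter, mem_univ, true_and]
        rcases hk with h | h <;> subst h
        · exact ⟨hiv, hiv⟩
        · exact ⟨hjv, hjv⟩
  -- the key inner-product computation
  have key : ∀ u v : Fin t, ∑ i : Fin m, f u i * f v i = (N u v : ℝ) := by
    intro u v
    simp only [hf, hN, ite_mul, one_mul, zero_mul, mul_ite, mul_one, mul_zero, ← ite_and]
    rw [Finset.sum_boole]
    norm_cast
    congr 1
    exact Finset.filter_congr fun i _ => and_comm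
  -- the indicator vectors are linearly independent
  have hli : LinearIndependent ℝ f := by
    rw [Fintype.linearIndependent_iff]
    intro g hg
    have hg' : ∀ i : Fin m, ∑ v : Fin t, g v * f v i = 0 := by
      intro i
      have := congrFun hg i
      simpa using this
    have main : ∑ u : Fin t, ∑ v : Fin t, g u * g v * (N u v : ℝ) = 0 := by
      have e1 : ∀ u v : Fin t, g u * g v * (N u v : ℝ)
          = ∑ i : Fin m, (g u * f u i) * (g v * f v i) := by
        intro u v
        rw [← key u v, Finset.mul_sum]
        exact Finset.sum_congr rfl fun i _ => by ring
      calc ∑ u : Fin t, ∑ v : Fin t, g u * g v * (N u v : ℝ)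
          = ∑ u : Fin t, ∑ v : Fin t, ∑ i : Fin m, (g u * f u i) * (g v * f v i) := by
            exact Finset.sum_congr rfl fun u _ => Finset.sum_congr rfl fun v _ => e1 u v
        _ = ∑ u : Fin t, ∑ i : Fin m, ∑ v : Fin t, (g u * f u i) * (g v * f v i) :=
            Finset.sum_congr rfl fun u _ => Finset.sum_comm
        _ = ∑ i : Fin m, ∑ u : Fin t, ∑ v : Fin t, (g u * f u i) * (g v * f v i) :=
            Finset.sum_comm
        _ = ∑ i : Fin m, (∑ v : Fin t, g v * f v i) * (∑ v : Fin t, g v * f v i) := by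
            exact Finset.sum_congr rfl fun i _ => by rw [Finset.sum_mul_sum]
        _ = 0 := by simp [hg']
    -- decompose N into all-ones plus diagonal part
    have decomp : ∑ u : Fin t, ∑ v : Fin t, g u * g v * (N u v : ℝ)
        = (∑ v : Fin t, g v) ^ 2 + ∑ v : Fin t, (g v) ^ 2 * ((N v v : ℝ) - 1) := by
      have hNd : ∀ u v : Fin t, (N u v : ℝ)
          = 1 + (if u = v then (N v v : ℝ) - 1 else 0) := by
        intro u v
        by_cases h : u = v
        · subst h; simp
        · simp [h, hN1 u v h]
      calc ∑ u : Fin t, ∑ v : Fin t, g u * g v * (N u v : ℝ)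
          = ∑ u : Fin t, ∑ v : Fin t,
              (g u * g v + g u * g v * (if u = v then (N v v : ℝ) - 1 else 0)) := by
            refine Finset.sum_congr rfl fun u _ => Finset.sum_congr rfl fun v _ => ?_
            rw [hNd u v]; ring
        _ = (∑ u : Fin t, ∑ v : Fin t, g u * g v)
            + ∑ u : Fin t, ∑ v : Fin t, g u * g v * (if u = v then (N v v : ℝ) - 1 else 0) := by
            rw [← Finset.sum_add_distrib]
            exact Finset.sum_congr rfl fun u _ => Finset.sum_add_distrib
        _ = (∑ v : Fin t, g v) ^ 2 + ∑ v : Fin t, (g v) ^ 2 * ((N v v : ℝ) - 1) := by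
            congr 1
            · rw [sq, Finset.sum_mul_sum]
            · rw [Finset.sum_comm]
              refine Finset.sum_congr rfl fun v _ => ?_
              simp only [mul_ite, mul_zero]
              rw [Finset.sum_ite_eq' univ v (fun u => g u * g v * ((N v v : ℝ) - 1))]
              simp [sq]
    have hterms_nonneg : ∀ v ∈ (univ : Finset (Fin t)), 0 ≤ (g v) ^ 2 * ((N v v : ℝ) - 1) := by
      intro v _
      have hv : (2 : ℝ) ≤ (N v v : ℝ) := by exact_mod_cast hr v
      exact mul_nonneg (sq_nonneg _) (by linarith)
    have hsum0 : ∑ v : Fin t, (g v) ^ 2 * ((N v v : ℝ) - 1) = 0 := by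
      have h1 : (0 : ℝ) ≤ (∑ v : Fin t, g v) ^ 2 := sq_nonneg _
      have h2 : 0 ≤ ∑ v : Fin t, (g v) ^ 2 * ((N v v : ℝ) - 1) :=
        Finset.sum_nonneg hterms_nonneg
      rw [decomp] at main
      linarith
    intro v
    have hv0 := (Finset.sum_eq_zero_iff_of_nonneg hterms_nonneg).mp hsum0 v (mem_univ v)
    have hv : (2 : ℝ) ≤ (N v v : ℝ) := by exact_mod_cast hr v
    have hg2 : (g v) ^ 2 = 0 := by
      rcases mul_eq_zero.mp hv0 with h | h
      · exact h
      · linarith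
    exact pow_eq_zero_iff (two_ne_zero) |>.mp hg2
  have := hli.fintype_card_le_finrank
  simpa [Module.finrank_fintype_fun_eq_card] using this
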